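/- If y : D → {0,1} is fixed and, for each resource type r, the resulting single-commodity flow feasibility problem IPM-R on a DAG has an integral feasible solution whenever it has a fractional one (integrality of network flow polytopes), then every extreme point of the polytope {(y,x) : y ∈ {0,1}^D, x satisfies constraints (2)–(4) and 0 ≤ x ≤ 1} has integral x coordinates. -/

import Mathlib

open Finset

-- (deps from part1/kern/part3 will be concatenated; for dev, include them)

/-- A real number is integral. -/
private def IsIntR (c : ℝ) : Prop := ∃ n : ℤ, c = n

private lemma isIntR_sum {ι : Type*} (s : Finset ι) (f : ι → ℝ)
    (h : ∀ i ∈ s, IsIntR (f i)) : IsIntR (∑ i ∈ s, f i) := by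
  classical
  induction s using Finset.induction_on with
  | empty => exact ⟨0, by simp⟩
  | @insert a t hx ih =>
    obtain ⟨n, hn⟩ := h a (mem_insert_self a t)
    obtain ⟨m, hm⟩ := ih (fun i hi => h i (mem_insert_of_mem hi))
    exact ⟨n + m, by rw [Finset.sum_insert hx, hn, hm]; push_cast; ring⟩

private lemma isIntR_sub {a b : ℝ} (ha : IsIntR a) (hb : IsIntR b) : IsIntR (a - b) := by
  obtain ⟨n, rfl⟩ := ha; obtain ⟨m, rfl⟩ := hb
  exact ⟨n - m, by push_cast; ring⟩

private lemma not_frac_of_isIntR {c : ℝ} (h : IsIntR c) : ¬ (0 < c ∧ c < 1) := by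
  obtain ⟨n, rfl⟩ := h
  rintro ⟨h0, h1⟩
  have h0' : (0 : ℤ) < n := by exact_mod_cast h0
  have h1' : n < (1 : ℤ) := by exact_mod_cast h1
  omega

private lemma isIntR_of_binary {c : ℝ} (h : c = 0 ∨ c = 1) : IsIntR c := by
  rcases h with h | h <;> subst h
  · exact ⟨0, by norm_num⟩
  · exact ⟨1, by norm_num⟩

private lemma isIntR_of_box {c : ℝ} (h0 : 0 ≤ c) (h1 : c ≤ 1)
    (h : ¬ (0 < c ∧ c < 1)) : IsIntR c := by
  rcases eq_or_lt_of_le h0 with h0' | h0'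
  · exact ⟨0, h0'.symm ▸ by norm_num⟩
  rcases eq_or_lt_of_le h1 with h1' | h1'
  · exact ⟨1, h1' ▸ by norm_num⟩
  exact absurd ⟨h0', h1'⟩ h

/-- In a finite sum with integral value and all terms in `[0,1]`, a fractional
term never comes alone. -/
private lemma exists_other_frac {ι : Type*} [Fintype ι] (f : ι → ℝ)
    (hb : ∀ i, 0 ≤ f i ∧ f i ≤ 1) (hint : IsIntR (∑ i, f i))
    (i₀ : ι) (h₀ : 0 < f i₀ ∧ f i₀ < 1) :
    ∃ i₁, i₁ ≠ i₀ ∧ 0 < f i₁ ∧ f i₁ < 1 := by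
  classical
  by_contra hno
  push_neg at hno
  have hrest : IsIntR (∑ i ∈ univ.erase i₀, f i) := by
    refine isIntR_sum _ _ (fun i hi => ?_)
    have hne : i ≠ i₀ := (Finset.mem_erase.mp hi).1
    exact isIntR_of_box (hb i).1 (hb i).2 (fun hf => (not_lt.mpr (hno i hne hf.1)) hf.2)
  have : IsIntR (f i₀) := by
    have hsum : f i₀ = (∑ i, f i) - ∑ i ∈ univ.erase i₀, f i := by
      rw [← Finset.add_sum_erase _ f (mem_univ i₀)]; ring
    rw [hsum]; exact isIntR_sub hint hrest
  exact not_frac_of_isIntR this h₀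
set_option linter.unusedSectionVars false

lemma fiber_sum_card {E A : Type*} [Fintype E] [DecidableEq A]
    (p : E → A) (NA : Finset A) :
    ∑ a ∈ NA, (univ.filter (fun e => p e = a)).card
      = (univ.filter (fun e => p e ∈ NA)).card := by
  classical
  rw [Finset.card_eq_sum_card_fiberwise (f := p) (s := univ.filter (fun e => p e ∈ NA)) (t := NA)
    (fun e he => (mem_filter.mp he).2)]
  refine Finset.sum_congr rfl fun a ha => ?_
  congr 1
  ext e
  simp only [mem_filter, mem_univ, true_and]
  exact ⟨fun h => ⟨h ▸ ha, h⟩, fun h => h.2⟩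

lemma kernel_lemma {E : Type*} [Fintype E] [Nonempty E] [DecidableEq E]
    {A B : Type*} [DecidableEq A] [DecidableEq B]
    (p : E → A) (q : E → B) (CA : A → Prop) (CB : B → Prop)
    [DecidablePred CA] [DecidablePred CB]
    (hA : ∀ a, CA a → ∀ e, p e = a → ∃ e', e' ≠ e ∧ p e' = a)
    (hB : ∀ b, CB b → ∀ e, q e = b → ∃ e', e' ≠ e ∧ q e' = b) :
    ∃ v : E → ℝ, v ≠ 0 ∧
      (∀ a, CA a → ∑ e ∈ univ.filter (fun e => p e = a), v e = 0) ∧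
      (∀ b, CB b → ∑ e ∈ univ.filter (fun e => q e = b), v e = 0) := by
  classical
  replace hA : ∀ a, CA a → (univ.filter (fun e => p e = a)).card ≠ 1 := by
    intro a hca hcard
    obtain ⟨e, he⟩ := Finset.card_eq_one.mp hcard
    have hem : e ∈ univ.filter (fun e => p e = a) := he ▸ Finset.mem_singleton_self e
    obtain ⟨e', hne, hpe'⟩ := hA a hca e (Finset.mem_filter.mp hem).2
    have : e' ∈ ({e} : Finset E) := he ▸ Finset.mem_filter.mpr ⟨mem_univ _, hpe'⟩
    exact hne (Finset.mem_singleton.mp this)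
  replace hB : ∀ b, CB b → (univ.filter (fun e => q e = b)).card ≠ 1 := by
    intro b hcb hcard
    obtain ⟨e, he⟩ := Finset.card_eq_one.mp hcard
    have hem : e ∈ univ.filter (fun e => q e = b) := he ▸ Finset.mem_singleton_self e
    obtain ⟨e', hne, hqe'⟩ := hB b hcb e (Finset.mem_filter.mp hem).2
    have : e' ∈ ({e} : Finset E) := he ▸ Finset.mem_filter.mpr ⟨mem_univ _, hqe'⟩
    exact hne (Finset.mem_singleton.mp this)
  set n := Fintype.card E with hn
  have hnpos : 0 < n := Fintype.card_pos
  set NA : Finset A := (univ.image p).filter CA with hNA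
  set NB : Finset B := (univ.image q).filter CB with hNB
  have hdegA : ∀ a ∈ NA, 2 ≤ (univ.filter (fun e => p e = a)).card := by
    intro a ha
    rw [hNA, mem_filter, mem_image] at ha
    obtain ⟨⟨e, _, he⟩, hca⟩ := ha
    have h1 : (univ.filter (fun e => p e = a)).card ≠ 0 := by
      rw [Ne, Finset.card_eq_zero, Finset.filter_eq_empty_iff]
      push_neg; exact ⟨e, mem_univ e, he⟩
    have := hA a hca; omega
  have hdegB : ∀ b ∈ NB, 2 ≤ (univ.filter (fun e => q e = b)).card := by
    intro b hb
    rw [hNB, mem_filter, mem_image] at hb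
    obtain ⟨⟨e, _, he⟩, hcb⟩ := hb
    have h1 : (univ.filter (fun e => q e = b)).card ≠ 0 := by
      rw [Ne, Finset.card_eq_zero, Finset.filter_eq_empty_iff]
      push_neg; exact ⟨e, mem_univ e, he⟩
    have := hB b hcb; omega
  have hcountA : 2 * NA.card ≤ (univ.filter (fun e => p e ∈ NA)).card := by
    rw [← fiber_sum_card p NA]
    calc 2 * NA.card = ∑ _a ∈ NA, 2 := by rw [Finset.sum_const, smul_eq_mul, mul_comm]
    _ ≤ _ := Finset.sum_le_sum hdegA
  have hcountB : 2 * NB.card ≤ (univ.filter (fun e => q e ∈ NB)).card := by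
    rw [← fiber_sum_card q NB]
    calc 2 * NB.card = ∑ _b ∈ NB, 2 := by rw [Finset.sum_const, smul_eq_mul, mul_comm]
    _ ≤ _ := Finset.sum_le_sum hdegB
  have hfA : (univ.filter (fun e => p e ∈ NA)).card ≤ n := by
    simpa [hn] using Finset.card_filter_le (univ : Finset E) _
  have hfB : (univ.filter (fun e => q e ∈ NB)).card ≤ n := by
    simpa [hn] using Finset.card_filter_le (univ : Finset E) _
  -- the linear map
  let T : (E → ℝ) →ₗ[ℝ] ((↥NA ⊕ ↥NB) → ℝ) :=
    { toFun := fun v => Sum.elim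
        (fun a => ∑ e ∈ univ.filter (fun e => p e = (a : A)), v e)
        (fun b => ∑ e ∈ univ.filter (fun e => q e = (b : B)), v e)
      map_add' := by
        intro u v; funext c; cases c <;> simp [Finset.sum_add_distrib]
      map_smul' := by
        intro c v; funext w; cases w <;> simp [Finset.mul_sum] }
  have hrange : Module.finrank ℝ ↥(LinearMap.range T) < n := by
    by_cases hall : ∀ e, CA (p e) ∧ CB (q e)
    · -- dependency case
      have hANA : ∀ e : E, p e ∈ NA := fun e =>
        mem_filter.mpr ⟨mem_image.mpr ⟨e, mem_univ e, rfl⟩, (hall e).1⟩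
      have hBNB : ∀ e : E, q e ∈ NB := fun e =>
        mem_filter.mpr ⟨mem_image.mpr ⟨e, mem_univ e, rfl⟩, (hall e).2⟩
      let φ : ((↥NA ⊕ ↥NB) → ℝ) →ₗ[ℝ] ℝ :=
        { toFun := fun g => (∑ a : ↥NA, g (Sum.inl a)) - ∑ b : ↥NB, g (Sum.inr b)
          map_add' := by intro u v; simp [Finset.sum_add_distrib]; ring
          map_smul' := by
            intro c v
            simp only [Pi.smul_apply, smul_eq_mul, RingHom.id_apply]
            rw [mul_sub, Finset.mul_sum, Finset.mul_sum] }
      have hTker : LinearMap.range T ≤ LinearMap.ker φ := by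
        rintro g ⟨v, rfl⟩
        have h1 : (∑ a : ↥NA, ∑ e ∈ univ.filter (fun e => p e = (a : A)), v e)
            = ∑ e, v e := by
          rw [Finset.sum_coe_sort NA
            (fun a => ∑ e ∈ univ.filter (fun e => p e = a), v e)]
          exact Finset.sum_fiberwise_of_maps_to (fun e _ => hANA e) v
        have h2 : (∑ b : ↥NB, ∑ e ∈ univ.filter (fun e => q e = (b : B)), v e)
            = ∑ e, v e := by
          rw [Finset.sum_coe_sort NB
            (fun b => ∑ e ∈ univ.filter (fun e => q e = b), v e)]
          exact Finset.sum_fiberwise_of_maps_to (fun e _ => hBNB e) v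
        simp only [LinearMap.mem_ker, φ, T, LinearMap.coe_mk, AddHom.coe_mk, Sum.elim_inl,
          Sum.elim_inr]
        rw [h1, h2, sub_self]
      have hNAne : NA.Nonempty := ⟨p (Classical.arbitrary E), hANA _⟩
      have hφsurj : LinearMap.range φ = ⊤ := by
        rw [LinearMap.range_eq_top]
        intro c
        refine ⟨fun w => if w = Sum.inl ⟨p (Classical.arbitrary E), hANA _⟩ then c else 0, ?_⟩
        simp only [φ, LinearMap.coe_mk, AddHom.coe_mk]
        rw [Finset.sum_eq_single (⟨p (Classical.arbitrary E), hANA _⟩ : ↥NA)]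
        · simp
        · intro b _ hb; simp [Sum.inl.injEq, hb]
        · intro h; exact absurd (mem_univ _) h
      have hkerφ : Module.finrank ℝ ↥(LinearMap.ker φ) + 1 = NA.card + NB.card := by
        have := LinearMap.finrank_range_add_finrank_ker φ
        rw [hφsurj] at this
        simp only [finrank_top] at this
        rw [Module.finrank_self] at this
        have hW : Module.finrank ℝ ((↥NA ⊕ ↥NB) → ℝ) = NA.card + NB.card := by
          rw [Module.finrank_pi]
          simp [Fintype.card_sum]
        omega
      have hle : Module.finrank ℝ ↥(LinearMap.range T)
          ≤ Module.finrank ℝ ↥(LinearMap.ker φ) := Submodule.finrank_mono hTker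
      have hcard : NA.card + NB.card ≤ n := by omega
      omega
    · -- some free endpoint
      push_neg at hall
      obtain ⟨e₀, he₀⟩ := hall
      have hstrict : NA.card + NB.card < n := by
        rcases Classical.em (CA (p e₀)) with hc | hc
        · have hcb := he₀ hc
          have : (univ.filter (fun e => q e ∈ NB)).card < n := by
            rw [hn]
            refine Finset.card_lt_card ?_
            rw [Finset.ssubset_univ_iff, Ne, Finset.filter_eq_self]
            push_neg
            refine ⟨e₀, mem_univ e₀, fun hmem => ?_⟩
            exact hcb (mem_filter.mp hmem).2
          omega
        · have : (univ.filter (fun e => p e ∈ NA)).card < n := by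
            rw [hn]
            refine Finset.card_lt_card ?_
            rw [Finset.ssubset_univ_iff, Ne, Finset.filter_eq_self]
            push_neg
            refine ⟨e₀, mem_univ e₀, fun hmem => ?_⟩
            exact hc (mem_filter.mp hmem).2
          omega
      calc Module.finrank ℝ ↥(LinearMap.range T)
          ≤ Module.finrank ℝ ((↥NA ⊕ ↥NB) → ℝ) := Submodule.finrank_le _
        _ = NA.card + NB.card := by rw [Module.finrank_pi]; simp [Fintype.card_sum]
        _ < n := hstrict
  -- extract a nonzero kernel vector
  have hrn := LinearMap.finrank_range_add_finrank_ker T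
  rw [Module.finrank_pi, ← hn] at hrn
  have hkerpos : 0 < Module.finrank ℝ ↥(LinearMap.ker T) := by omega
  obtain ⟨⟨v, hv⟩, hvne⟩ := Module.finrank_pos_iff_exists_ne_zero.mp hkerpos
  have hv0 : v ≠ 0 := by
    intro h; apply hvne; ext; simp [h]
  refine ⟨v, hv0, ?_, ?_⟩
  · intro a hca
    by_cases hmem : a ∈ NA
    · have := congrFun (LinearMap.mem_ker.mp hv) (Sum.inl ⟨a, hmem⟩)
      simpa [T] using this
    · have hempty : univ.filter (fun e => p e = a) = ∅ := by
        rw [Finset.filter_eq_empty_iff]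
        intro e _ he
        exact hmem (mem_filter.mpr ⟨mem_image.mpr ⟨e, mem_univ e, he⟩, hca⟩)
      rw [hempty, Finset.sum_empty]
  · intro b hcb
    by_cases hmem : b ∈ NB
    · have := congrFun (LinearMap.mem_ker.mp hv) (Sum.inr ⟨b, hmem⟩)
      simpa [T] using this
    · have hempty : univ.filter (fun e => q e = b) = ∅ := by
        rw [Finset.filter_eq_empty_iff]
        intro e _ he
        exact hmem (mem_filter.mpr ⟨mem_image.mpr ⟨e, mem_univ e, he⟩, hcb⟩)
      rw [hempty, Finset.sum_empty]
/-- Edge type for the flow perturbation graph: supply arcs, transfer arcs,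
sink arcs, and one auxiliary slack edge per demand node. -/
private abbrev IPMEdge (S D : Type*) := (S × D) ⊕ ((D × D) ⊕ (D ⊕ D))

/-- Tail-side ("slot 1") endpoint of an edge. -/
private def pEdge {S D : Type*} : IPMEdge S D → S ⊕ D
  | .inl (s, _) => .inl s
  | .inr (.inl (i, _)) => .inr i
  | .inr (.inr (.inl d)) => .inr d
  | .inr (.inr (.inr i)) => .inr i

/-- Head-side ("slot 2") endpoint of an edge. -/
private def qEdge {S D : Type*} : IPMEdge S D → D ⊕ Unit
  | .inl (_, d) => .inl d
  | .inr (.inl (_, j)) => .inl j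
  | .inr (.inr (.inl _)) => .inr ()
  | .inr (.inr (.inr i)) => .inl i

/-- The "active edge" predicate: fractional arcs plus active auxiliary edges. -/
private def PEdge {S D : Type*} (xsd : S → D → ℝ) (xij : D → D → ℝ) (xdt : D → ℝ)
    (Aux : D → Prop) : IPMEdge S D → Prop
  | .inl (s, d) => 0 < xsd s d ∧ xsd s d < 1
  | .inr (.inl (i, j)) => 0 < xij i j ∧ xij i j < 1
  | .inr (.inr (.inl d)) => 0 < xdt d ∧ xdt d < 1
  | .inr (.inr (.inr i)) => Aux i

section Perturb
variable {R S D : Type*} [Fintype R] [Fintype S] [Fintype D]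

private lemma sum_shift {ι : Type*} [Fintype ι] (f g : ι → ℝ) (θ ε : ℝ) :
    (∑ i, (f i + θ * (ε * g i))) = (∑ i, f i) + θ * (ε * ∑ i, g i) := by
  rw [Finset.sum_add_distrib]
  congr 1
  rw [← Finset.mul_sum, ← Finset.mul_sum]

private lemma IPM_perturb
    (Md : D → Set R) (Bm : S → D → Prop) (Am : D → D → Prop)
    (l : R → S → ℕ) (r : R) (yv : D → ℝ) (hy : ∀ d, yv d = 0 ∨ yv d = 1)
    (xsd : S → D → ℝ) (xij : D → D → ℝ) (xdt : D → ℝ)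
    (bsd : ∀ s d, 0 ≤ xsd s d ∧ xsd s d ≤ 1)
    (bij : ∀ i j, 0 ≤ xij i j ∧ xij i j ≤ 1)
    (bdt : ∀ d, 0 ≤ xdt d ∧ xdt d ≤ 1)
    (hsup1 : ∀ s d, ¬ (Bm s d ∧ r ∈ Md d) → xsd s d = 0)
    (hsup2 : ∀ i j, ¬ (Am i j ∧ r ∈ Md i ∧ r ∈ Md j) → xij i j = 0)
    (hsup3 : ∀ d, r ∉ Md d → xdt d = 0)
    (hcap : ∀ s, ∑ d, xsd s d ≤ l r s)
    (hcons : ∀ i : D, r ∈ Md i →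
      (∑ s, xsd s i) + (∑ h, xij h i) = (∑ j, xij i j) + xdt i)
    (hlow : ∀ i : D, r ∈ Md i → yv i ≤ (∑ s, xsd s i) + (∑ h, xij h i))
    (hfrac : (∃ s d, 0 < xsd s d ∧ xsd s d < 1) ∨ (∃ i j, 0 < xij i j ∧ xij i j < 1)
      ∨ (∃ d, 0 < xdt d ∧ xdt d < 1)) :
    ∃ (wsd : S → D → ℝ) (wij : D → D → ℝ) (wdt : D → ℝ),
      ¬ (wsd = 0 ∧ wij = 0 ∧ wdt = 0) ∧
      ∀ θ : ℝ, (θ = 1 ∨ θ = -1) →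
        (∀ s d, 0 ≤ xsd s d + θ * wsd s d ∧ xsd s d + θ * wsd s d ≤ 1) ∧
        (∀ i j, 0 ≤ xij i j + θ * wij i j ∧ xij i j + θ * wij i j ≤ 1) ∧
        (∀ d, 0 ≤ xdt d + θ * wdt d ∧ xdt d + θ * wdt d ≤ 1) ∧
        (∀ s d, ¬ (Bm s d ∧ r ∈ Md d) → xsd s d + θ * wsd s d = 0) ∧
        (∀ i j, ¬ (Am i j ∧ r ∈ Md i ∧ r ∈ Md j) → xij i j + θ * wij i j = 0) ∧
        (∀ d, r ∉ Md d → xdt d + θ * wdt d = 0) ∧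
        (∀ s, ∑ d, (xsd s d + θ * wsd s d) ≤ l r s) ∧
        (∀ i : D, r ∈ Md i →
          (∑ s, (xsd s i + θ * wsd s i)) + (∑ h, (xij h i + θ * wij h i))
            = (∑ j, (xij i j + θ * wij i j)) + (xdt i + θ * wdt i)) ∧
        (∀ i : D, r ∈ Md i →
          yv i ≤ (∑ s, (xsd s i + θ * wsd s i)) + (∑ h, (xij h i + θ * wij h i))) := by
  classical
  -- auxiliary-edge activation predicate
  set Aux : D → Prop := fun i =>
    (¬ (yv i = 1 ∧ (∑ s, xsd s i) + (∑ h, xij h i) = 1)) ∧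
    ((∃ s, 0 < xsd s i ∧ xsd s i < 1) ∨ (∃ h, 0 < xij h i ∧ xij h i < 1)) ∧
    ((∃ j, 0 < xij i j ∧ xij i j < 1) ∨ (0 < xdt i ∧ xdt i < 1)) with hAuxDef
  set P : IPMEdge S D → Prop := PEdge xsd xij xdt Aux with hPDef
  letI : DecidablePred P := Classical.decPred _
  haveI hEne : Nonempty {e : IPMEdge S D // P e} := by
    rcases hfrac with ⟨s, d, h⟩ | ⟨i, j, h⟩ | ⟨d, h⟩
    · exact ⟨⟨Sum.inl (s, d), h⟩⟩
    · exact ⟨⟨Sum.inr (Sum.inl (i, j)), h⟩⟩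
    · exact ⟨⟨Sum.inr (Sum.inr (Sum.inl d)), h⟩⟩
  -- the two integrality facts used for degree bounds
  have keyout : ∀ i : D, r ∈ Md i →
      ¬ Aux i →
      ((∃ j, 0 < xij i j ∧ xij i j < 1) ∨ (0 < xdt i ∧ xdt i < 1)) →
      IsIntR ((∑ j, xij i j) + xdt i) := by
    intro i hMd hnaux htail
    by_cases hLT : yv i = 1 ∧ (∑ s, xsd s i) + (∑ h, xij h i) = 1
    · exact ⟨1, by rw [← hcons i hMd, hLT.2]; norm_num⟩
    · have hnh : ¬ ((∃ s, 0 < xsd s i ∧ xsd s i < 1) ∨ (∃ h, 0 < xij h i ∧ xij h i < 1)) :=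
        fun hh => hnaux (by rw [hAuxDef]; exact ⟨hLT, hh, htail⟩)
      have hnh1 : ∀ s, ¬ (0 < xsd s i ∧ xsd s i < 1) := fun s hs => hnh (Or.inl ⟨s, hs⟩)
      have hnh2 : ∀ h, ¬ (0 < xij h i ∧ xij h i < 1) := fun h hs => hnh (Or.inr ⟨h, hs⟩)
      have h1 : IsIntR (∑ s, xsd s i) :=
        isIntR_sum _ _ (fun s _ => isIntR_of_box (bsd s i).1 (bsd s i).2 (hnh1 s))
      have h2 : IsIntR (∑ h, xij h i) :=
        isIntR_sum _ _ (fun h _ => isIntR_of_box (bij h i).1 (bij h i).2 (hnh2 h))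
      rw [← hcons i hMd]
      obtain ⟨n, hn⟩ := h1; obtain ⟨m, hm⟩ := h2
      exact ⟨n + m, by rw [hn, hm]; push_cast; ring⟩
  -- second integrality fact: inflow integral when no fractional tail
  have keyin : ∀ i : D, r ∈ Md i →
      ¬ Aux i →
      ((∃ s, 0 < xsd s i ∧ xsd s i < 1) ∨ (∃ h, 0 < xij h i ∧ xij h i < 1)) →
      IsIntR ((∑ s, xsd s i) + (∑ h, xij h i)) := by
    intro i hMd hnaux hhead
    by_cases hLT : yv i = 1 ∧ (∑ s, xsd s i) + (∑ h, xij h i) = 1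
    · exact ⟨1, by rw [hLT.2]; norm_num⟩
    · have hnt : ¬ ((∃ j, 0 < xij i j ∧ xij i j < 1) ∨ (0 < xdt i ∧ xdt i < 1)) :=
        fun ht => hnaux (by rw [hAuxDef]; exact ⟨hLT, hhead, ht⟩)
      have hnt1 : ∀ j, ¬ (0 < xij i j ∧ xij i j < 1) := fun j hs => hnt (Or.inl ⟨j, hs⟩)
      have hnt2 : ¬ (0 < xdt i ∧ xdt i < 1) := fun hs => hnt (Or.inr hs)
      have h1 : IsIntR (∑ j, xij i j) :=
        isIntR_sum _ _ (fun j _ => isIntR_of_box (bij i j).1 (bij i j).2 (hnt1 j))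
      have h2 : IsIntR (xdt i) := isIntR_of_box (bdt i).1 (bdt i).2 hnt2
      rw [hcons i hMd]
      obtain ⟨n, hn⟩ := h1; obtain ⟨m, hm⟩ := h2
      exact ⟨n + m, by rw [hn, hm]; push_cast; ring⟩
  -- degree hypotheses for the kernel lemma
  have hA : ∀ a : S ⊕ D,
      Sum.elim (fun s => (∑ d, xsd s d) = ((l r s : ℕ) : ℝ)) (fun _ => True) a →
      ∀ e : {e : IPMEdge S D // P e}, pEdge e.1 = a →
      ∃ e' : {e : IPMEdge S D // P e}, e' ≠ e ∧ pEdge e'.1 = a := by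
    rintro a hca ⟨ee, hPe⟩ hpe
    rcases ee with ⟨s, d0⟩ | eee
    · -- supply arc (s, d0), endpoint inl s
      simp only [pEdge] at hpe
      subst hpe
      simp only [Sum.elim_inl] at hca
      have hPe' : 0 < xsd s d0 ∧ xsd s d0 < 1 := hPe
      have hint : IsIntR (∑ d, xsd s d) := ⟨(l r s : ℤ), by exact_mod_cast hca⟩
      obtain ⟨d1, hne, hfr⟩ := exists_other_frac (xsd s) (fun d => bsd s d) hint d0 hPe'
      refine ⟨⟨Sum.inl (s, d1), hfr⟩, ?_, by simp [pEdge]⟩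
      simp [Subtype.ext_iff, hne]
    · rcases eee with ⟨i, j0⟩ | ee2
      · -- transfer arc (i, j0), endpoint inr i
        simp only [pEdge] at hpe
        subst hpe
        have hPe' : 0 < xij i j0 ∧ xij i j0 < 1 := hPe
        by_cases hax : Aux i
        · refine ⟨⟨Sum.inr (Sum.inr (Sum.inr i)), hax⟩, ?_, by simp [pEdge]⟩
          simp [Subtype.ext_iff]
        · have hMd : r ∈ Md i := by
            by_contra hmd
            have h0 := hsup2 i j0 (fun hc => hmd hc.2.1)
            rw [h0] at hPe'; exact lt_irrefl _ hPe'.1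
          have hout := keyout i hMd hax (Or.inl ⟨j0, hPe'⟩)
          have hint : IsIntR (∑ x : D ⊕ Unit, Sum.elim (fun j => xij i j) (fun _ => xdt i) x) := by
            rw [Fintype.sum_sum_type]; simpa using hout
          obtain ⟨i1, hne, hfr⟩ := exists_other_frac
            (Sum.elim (fun j => xij i j) (fun _ => xdt i))
            (by rintro (j | u); exacts [bij i j, bdt i]) hint (Sum.inl j0) hPe'
          rcases i1 with j1 | u
          · have hj : j1 ≠ j0 := fun h => hne (by rw [h])
            refine ⟨⟨Sum.inr (Sum.inl (i, j1)), hfr⟩, ?_, by simp [pEdge]⟩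
            simp [Subtype.ext_iff, hj]
          · refine ⟨⟨Sum.inr (Sum.inr (Sum.inl i)), hfr⟩, ?_, by simp [pEdge]⟩
            simp [Subtype.ext_iff]
      · rcases ee2 with d | i
        · -- sink arc d, endpoint inr d
          simp only [pEdge] at hpe
          subst hpe
          have hPe' : 0 < xdt d ∧ xdt d < 1 := hPe
          by_cases hax : Aux d
          · refine ⟨⟨Sum.inr (Sum.inr (Sum.inr d)), hax⟩, ?_, by simp [pEdge]⟩
            simp [Subtype.ext_iff]
          · have hMd : r ∈ Md d := by
              by_contra hmd
              have h0 := hsup3 d hmd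
              rw [h0] at hPe'; exact lt_irrefl _ hPe'.1
            have hout := keyout d hMd hax (Or.inr hPe')
            have hint : IsIntR (∑ x : D ⊕ Unit, Sum.elim (fun j => xij d j) (fun _ => xdt d) x) := by
              rw [Fintype.sum_sum_type]; simpa using hout
            obtain ⟨i1, hne, hfr⟩ := exists_other_frac
              (Sum.elim (fun j => xij d j) (fun _ => xdt d))
              (by rintro (j | u); exacts [bij d j, bdt d]) hint (Sum.inr ()) hPe'
            rcases i1 with j1 | u
            · refine ⟨⟨Sum.inr (Sum.inl (d, j1)), hfr⟩, ?_, by simp [pEdge]⟩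
              simp [Subtype.ext_iff]
            · exact absurd rfl hne
        · -- aux edge at i, endpoint inr i
          simp only [pEdge] at hpe
          subst hpe
          have hax : Aux i := hPe
          have htail : (∃ j, 0 < xij i j ∧ xij i j < 1) ∨ (0 < xdt i ∧ xdt i < 1) := by
            rw [hAuxDef] at hax; exact hax.2.2
          rcases htail with ⟨j1, hfr⟩ | hfr
          · refine ⟨⟨Sum.inr (Sum.inl (i, j1)), hfr⟩, ?_, by simp [pEdge]⟩
            simp [Subtype.ext_iff]
          · refine ⟨⟨Sum.inr (Sum.inr (Sum.inl i)), hfr⟩, ?_, by simp [pEdge]⟩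
            simp [Subtype.ext_iff]
  have hB : ∀ b : D ⊕ Unit,
      Sum.elim (fun _ : D => True) (fun _ : Unit => False) b →
      ∀ e : {e : IPMEdge S D // P e}, qEdge e.1 = b →
      ∃ e' : {e : IPMEdge S D // P e}, e' ≠ e ∧ qEdge e'.1 = b := by
    rintro b hcb ⟨ee, hPe⟩ hqe
    rcases b with i | u
    swap
    · simp at hcb
    rcases ee with ⟨s0, d0⟩ | eee
    · -- supply arc (s0, d0): head endpoint inl d0
      simp only [qEdge] at hqe
      rw [Sum.inl.injEq] at hqe
      have hqe2 := hqe.symm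
      subst hqe2
      have hPe' : 0 < xsd s0 i ∧ xsd s0 i < 1 := hPe
      by_cases hax : Aux i
      · refine ⟨⟨Sum.inr (Sum.inr (Sum.inr i)), hax⟩, ?_, by simp [qEdge]⟩
        simp [Subtype.ext_iff]
      · have hMd : r ∈ Md i := by
          by_contra hmd
          have h0 := hsup1 s0 i (fun hc => hmd hc.2)
          rw [h0] at hPe'; exact lt_irrefl _ hPe'.1
        have hin := keyin i hMd hax (Or.inl ⟨s0, hPe'⟩)
        have hint : IsIntR (∑ x : S ⊕ D, Sum.elim (fun s => xsd s i) (fun h => xij h i) x) := by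
          rw [Fintype.sum_sum_type]; simpa using hin
        obtain ⟨i1, hne, hfr⟩ := exists_other_frac
          (Sum.elim (fun s => xsd s i) (fun h => xij h i))
          (by rintro (s | h); exacts [bsd s i, bij h i]) hint (Sum.inl s0) hPe'
        rcases i1 with s1 | h1
        · have hs : s1 ≠ s0 := fun h => hne (by rw [h])
          refine ⟨⟨Sum.inl (s1, i), hfr⟩, ?_, by simp [qEdge]⟩
          simp [Subtype.ext_iff, hs]
        · refine ⟨⟨Sum.inr (Sum.inl (h1, i)), hfr⟩, ?_, by simp [qEdge]⟩
          simp [Subtype.ext_iff]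
    · rcases eee with ⟨h0, j0⟩ | ee2
      · -- transfer arc (h0, j0): head endpoint inl j0
        simp only [qEdge] at hqe
        rw [Sum.inl.injEq] at hqe
        have hqe2 := hqe.symm
        subst hqe2
        have hPe' : 0 < xij h0 i ∧ xij h0 i < 1 := hPe
        by_cases hax : Aux i
        · refine ⟨⟨Sum.inr (Sum.inr (Sum.inr i)), hax⟩, ?_, by simp [qEdge]⟩
          simp [Subtype.ext_iff]
        · have hMd : r ∈ Md i := by
            by_contra hmd
            have hz0 := hsup2 h0 i (fun hc => hmd hc.2.2)
            rw [hz0] at hPe'; exact lt_irrefl _ hPe'.1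
          have hin := keyin i hMd hax (Or.inr ⟨h0, hPe'⟩)
          have hint : IsIntR (∑ x : S ⊕ D, Sum.elim (fun s => xsd s i) (fun h => xij h i) x) := by
            rw [Fintype.sum_sum_type]; simpa using hin
          obtain ⟨i1, hne, hfr⟩ := exists_other_frac
            (Sum.elim (fun s => xsd s i) (fun h => xij h i))
            (by rintro (s | h); exacts [bsd s i, bij h i]) hint (Sum.inr h0) hPe'
          rcases i1 with s1 | h1
          · refine ⟨⟨Sum.inl (s1, i), hfr⟩, ?_, by simp [qEdge]⟩
            simp [Subtype.ext_iff]
          · have hh : h1 ≠ h0 := fun h => hne (by rw [h])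
            refine ⟨⟨Sum.inr (Sum.inl (h1, i)), hfr⟩, ?_, by simp [qEdge]⟩
            simp [Subtype.ext_iff, hh]
      · rcases ee2 with d | i'
        · -- sink arc: head endpoint is inr (), not inl i
          simp only [qEdge] at hqe
          exact absurd hqe (by simp)
        · -- aux edge at i': head endpoint inl i'
          simp only [qEdge] at hqe
          rw [Sum.inl.injEq] at hqe
          have hqe2 := hqe.symm
          subst hqe2
          have hax : Aux i := hPe
          have hhead : (∃ s, 0 < xsd s i ∧ xsd s i < 1) ∨ (∃ h, 0 < xij h i ∧ xij h i < 1) := by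
            rw [hAuxDef] at hax; exact hax.2.1
          rcases hhead with ⟨s1, hfr⟩ | ⟨h1, hfr⟩
          · refine ⟨⟨Sum.inl (s1, i), hfr⟩, ?_, by simp [qEdge]⟩
            simp [Subtype.ext_iff]
          · refine ⟨⟨Sum.inr (Sum.inl (h1, i)), hfr⟩, ?_, by simp [qEdge]⟩
            simp [Subtype.ext_iff]
  -- apply the kernel lemma
  obtain ⟨v, hv0, hvA, hvB⟩ := kernel_lemma (E := {e : IPMEdge S D // P e})
    (fun e => pEdge e.1) (fun e => qEdge e.1)
    (Sum.elim (fun s => (∑ d, xsd s d) = ((l r s : ℕ) : ℝ)) (fun _ => True))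
    (Sum.elim (fun _ : D => True) (fun _ : Unit => False)) hA hB
  -- extend the kernel vector by zero
  set vext : IPMEdge S D → ℝ := fun e => if h : P e then v ⟨e, h⟩ else 0 with hvextDef
  have hve : ∀ e : {e : IPMEdge S D // P e}, vext e.1 = v e := by
    intro e
    rw [hvextDef]
    simp only
    rw [dif_pos e.2]
  have hz : ∀ e : IPMEdge S D, ¬ P e → vext e = 0 := by
    intro e h
    rw [hvextDef]
    simp only
    rw [dif_neg h]
  have hzsd : ∀ s d, ¬ (0 < xsd s d ∧ xsd s d < 1) → vext (Sum.inl (s, d)) = 0 :=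
    fun s d h => hz _ h
  have hzij : ∀ i j, ¬ (0 < xij i j ∧ xij i j < 1) → vext (Sum.inr (Sum.inl (i, j))) = 0 :=
    fun i j h => hz _ h
  have hzdt : ∀ d, ¬ (0 < xdt d ∧ xdt d < 1) → vext (Sum.inr (Sum.inr (Sum.inl d))) = 0 :=
    fun d h => hz _ h
  -- fiber sums as plain sums
  have hfibp : ∀ a : S ⊕ D,
      (∑ e ∈ univ.filter (fun e : {e : IPMEdge S D // P e} => pEdge e.1 = a), v e)
      = ∑ e : IPMEdge S D, if pEdge e = a then vext e else 0 := by
    intro a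
    rw [Finset.sum_filter]
    rw [show (∑ e : {e : IPMEdge S D // P e}, if pEdge e.1 = a then v e else 0)
        = ∑ e : {e : IPMEdge S D // P e}, if pEdge e.1 = a then vext e.1 else 0 from
      Finset.sum_congr rfl (fun e _ => by rw [hve e])]
    rw [← Finset.sum_subtype (univ.filter P) (fun e => by simp)
      (fun e => if pEdge e = a then vext e else 0)]
    exact Finset.sum_subset (Finset.subset_univ _) (fun e _ hne => by
      have hnp : ¬ P e := by simpa using hne
      simp [hz e hnp])
  have hfibq : ∀ b : D ⊕ Unit,
      (∑ e ∈ univ.filter (fun e : {e : IPMEdge S D // P e} => qEdge e.1 = b), v e)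
      = ∑ e : IPMEdge S D, if qEdge e = b then vext e else 0 := by
    intro b
    rw [Finset.sum_filter]
    rw [show (∑ e : {e : IPMEdge S D // P e}, if qEdge e.1 = b then v e else 0)
        = ∑ e : {e : IPMEdge S D // P e}, if qEdge e.1 = b then vext e.1 else 0 from
      Finset.sum_congr rfl (fun e _ => by rw [hve e])]
    rw [← Finset.sum_subtype (univ.filter P) (fun e => by simp)
      (fun e => if qEdge e = b then vext e else 0)]
    exact Finset.sum_subset (Finset.subset_univ _) (fun e _ hne => by
      have hnp : ¬ P e := by simpa using hne
      simp [hz e hnp])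
  -- node identities
  have hcapK : ∀ s, (∑ d, xsd s d) = ((l r s : ℕ) : ℝ) →
      (∑ d, vext (Sum.inl (s, d))) = 0 := by
    intro s hts
    have hk := hvA (Sum.inl s) (by simpa using hts)
    rw [hfibp] at hk
    rw [← hk]
    rw [Fintype.sum_sum_type]
    have h2 : (∑ x : (D × D) ⊕ (D ⊕ D),
        if pEdge (S := S) (Sum.inr x) = Sum.inl s then vext (Sum.inr x) else 0) = 0 := by
      apply Finset.sum_eq_zero
      rintro (⟨i, j⟩ | (d | i)) _ <;> simp [pEdge]
    rw [h2, add_zero, Fintype.sum_prod_type]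
    rw [Finset.sum_eq_single s
      (fun s' _ hne => Finset.sum_eq_zero (fun d _ => by simp [pEdge, hne]))
      (fun hs => absurd (mem_univ s) hs)]
    exact Finset.sum_congr rfl (fun d _ => by simp [pEdge])
  have htailK : ∀ i : D,
      (∑ j, vext (Sum.inr (Sum.inl (i, j)))) + vext (Sum.inr (Sum.inr (Sum.inl i)))
        + vext (Sum.inr (Sum.inr (Sum.inr i))) = 0 := by
    intro i
    have hk := hvA (Sum.inr i) (by simp)
    rw [hfibp] at hk
    rw [← hk]
    rw [Fintype.sum_sum_type, Fintype.sum_sum_type, Fintype.sum_sum_type]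
    have h1 : (∑ x : S × D, if pEdge (Sum.inl x) = Sum.inr i then vext (Sum.inl x) else 0) = 0 := by
      apply Finset.sum_eq_zero; rintro ⟨s, d⟩ _; simp [pEdge]
    have h2 : (∑ x : D × D,
        if pEdge (S := S) (Sum.inr (Sum.inl x)) = Sum.inr i then vext (Sum.inr (Sum.inl x)) else 0)
        = ∑ j, vext (Sum.inr (Sum.inl (i, j))) := by
      rw [Fintype.sum_prod_type]
      rw [Finset.sum_eq_single i
        (fun i' _ hne => Finset.sum_eq_zero (fun j _ => by simp [pEdge, hne]))
        (fun hs => absurd (mem_univ i) hs)]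
      exact Finset.sum_congr rfl (fun j _ => by simp [pEdge])
    have h3 : (∑ d : D,
        if pEdge (S := S) (D := D) (Sum.inr (Sum.inr (Sum.inl d))) = Sum.inr i
          then vext (Sum.inr (Sum.inr (Sum.inl d))) else 0)
        = vext (Sum.inr (Sum.inr (Sum.inl i))) := by
      rw [Finset.sum_eq_single i (fun d _ hne => by simp [pEdge, hne])
        (fun hs => absurd (mem_univ i) hs)]
      simp [pEdge]
    have h4 : (∑ d : D,
        if pEdge (S := S) (D := D) (Sum.inr (Sum.inr (Sum.inr d))) = Sum.inr i
          then vext (Sum.inr (Sum.inr (Sum.inr d))) else 0)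
        = vext (Sum.inr (Sum.inr (Sum.inr i))) := by
      rw [Finset.sum_eq_single i (fun d _ hne => by simp [pEdge, hne])
        (fun hs => absurd (mem_univ i) hs)]
      simp [pEdge]
    rw [h1, h2, h3, h4]
    ring
  have hheadK : ∀ i : D,
      (∑ s, vext (Sum.inl (s, i))) + (∑ h, vext (Sum.inr (Sum.inl (h, i))))
        + vext (Sum.inr (Sum.inr (Sum.inr i))) = 0 := by
    intro i
    have hk := hvB (Sum.inl i) (by simp)
    rw [hfibq] at hk
    rw [← hk]
    rw [Fintype.sum_sum_type, Fintype.sum_sum_type, Fintype.sum_sum_type]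
    have h1 : (∑ x : S × D, if qEdge (Sum.inl x) = (Sum.inl i : D ⊕ Unit) then vext (Sum.inl x) else 0)
        = ∑ s, vext (Sum.inl (s, i)) := by
      rw [Fintype.sum_prod_type]
      refine Finset.sum_congr rfl (fun s _ => ?_)
      rw [Finset.sum_eq_single i (fun d _ hne => by simp [qEdge, hne])
        (fun hs => absurd (mem_univ i) hs)]
      simp [qEdge]
    have h2 : (∑ x : D × D,
        if qEdge (S := S) (Sum.inr (Sum.inl x)) = (Sum.inl i : D ⊕ Unit)
          then vext (Sum.inr (Sum.inl x)) else 0)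
        = ∑ h, vext (Sum.inr (Sum.inl (h, i))) := by
      rw [Fintype.sum_prod_type]
      refine Finset.sum_congr rfl (fun h _ => ?_)
      rw [Finset.sum_eq_single i (fun j _ hne => by simp [qEdge, hne])
        (fun hs => absurd (mem_univ i) hs)]
      simp [qEdge]
    have h3 : (∑ d : D,
        if qEdge (S := S) (D := D) (Sum.inr (Sum.inr (Sum.inl d))) = (Sum.inl i : D ⊕ Unit)
          then vext (Sum.inr (Sum.inr (Sum.inl d))) else 0) = 0 := by
      apply Finset.sum_eq_zero; intro d _; simp [qEdge]
    have h4 : (∑ d : D,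
        if qEdge (S := S) (D := D) (Sum.inr (Sum.inr (Sum.inr d))) = (Sum.inl i : D ⊕ Unit)
          then vext (Sum.inr (Sum.inr (Sum.inr d))) else 0)
        = vext (Sum.inr (Sum.inr (Sum.inr i))) := by
      rw [Finset.sum_eq_single i (fun d _ hne => by simp [qEdge, hne])
        (fun hs => absurd (mem_univ i) hs)]
      simp [qEdge]
    rw [h1, h2, h3, h4]
    ring
  -- the auxiliary edge is absent at low-tight nodes
  have hauxLT : ∀ i, yv i = 1 → (∑ s, xsd s i) + (∑ h, xij h i) = 1 →
      vext (Sum.inr (Sum.inr (Sum.inr i))) = 0 := by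
    intro i h1 h2
    apply hz
    intro hax
    have hax' : Aux i := hax
    rw [hAuxDef] at hax'
    exact hax'.1 ⟨h1, h2⟩
  -- the bound constant
  set Csum : ℝ := ∑ e : IPMEdge S D, |vext e| with hCsumDef
  have hCs0 : 0 ≤ Csum := Finset.sum_nonneg (fun e _ => abs_nonneg _)
  have hsingle : ∀ e : IPMEdge S D, |vext e| ≤ Csum :=
    fun e => Finset.single_le_sum (fun e' _ => abs_nonneg (vext e')) (mem_univ e)
  have hcapB : ∀ s, |∑ d, vext (Sum.inl (s, d))| ≤ Csum := by
    intro s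
    calc |∑ d, vext (Sum.inl (s, d))| ≤ ∑ d, |vext (Sum.inl (s, d))| :=
          Finset.abs_sum_le_sum_abs _ _
    _ ≤ Csum := by
        rw [hCsumDef, Fintype.sum_sum_type, Fintype.sum_prod_type]
        have h1 : (∑ d, |vext (Sum.inl (s, d))|) ≤ ∑ s', ∑ d, |vext (Sum.inl (s', d))| :=
          Finset.single_le_sum (f := fun s' => ∑ d, |vext (Sum.inl (s', d))|)
            (fun s' _ => Finset.sum_nonneg fun d _ => abs_nonneg _) (mem_univ s)
        have h2 : (0:ℝ) ≤ ∑ x : (D × D) ⊕ (D ⊕ D), |vext (Sum.inr x)| :=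
          Finset.sum_nonneg fun x _ => abs_nonneg _
        linarith
  -- the budget set
  set Bud : Finset ℝ := insert 1 (
    ((univ.image fun sd : S × D =>
      if 0 < xsd sd.1 sd.2 ∧ xsd sd.1 sd.2 < 1
        then min (xsd sd.1 sd.2) (1 - xsd sd.1 sd.2) else 1) ∪
    (univ.image fun ij : D × D =>
      if 0 < xij ij.1 ij.2 ∧ xij ij.1 ij.2 < 1
        then min (xij ij.1 ij.2) (1 - xij ij.1 ij.2) else 1) ∪
    (univ.image fun d : D =>
      if 0 < xdt d ∧ xdt d < 1 then min (xdt d) (1 - xdt d) else 1) ∪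
    (univ.image fun s : S =>
      if (∑ d, xsd s d) = ((l r s : ℕ) : ℝ) then 1 else ((l r s : ℕ) : ℝ) - ∑ d, xsd s d) ∪
    (univ.image fun i : D =>
      if yv i = 1 ∧ r ∈ Md i ∧ (∑ s, xsd s i) + (∑ h, xij h i) ≠ 1
        then ((∑ s, xsd s i) + (∑ h, xij h i)) - 1 else 1))) with hBudDef
  have hBne : Bud.Nonempty := ⟨1, mem_insert_self _ _⟩
  have hBpos : ∀ b ∈ Bud, 0 < b := by
    intro b hb
    rw [hBudDef] at hb
    simp only [mem_insert, mem_union, mem_image, mem_univ, true_and] at hb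
    rcases hb with rfl | ⟨⟨⟨⟨sd, rfl⟩ | ⟨ij, rfl⟩⟩ | ⟨d, rfl⟩⟩ | ⟨s, rfl⟩⟩ | ⟨i, rfl⟩
    · norm_num
    · split_ifs with h
      · exact lt_min h.1 (by linarith [h.2])
      · norm_num
    · split_ifs with h
      · exact lt_min h.1 (by linarith [h.2])
      · norm_num
    · split_ifs with h
      · exact lt_min h.1 (by linarith [h.2])
      · norm_num
    · split_ifs with h
      · norm_num
      · have := hcap s
        rcases lt_or_eq_of_le this with h' | h'
        · linarith
        · exact absurd h' h
    · split_ifs with h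
      · obtain ⟨h1, h2, h3⟩ := h
        have := hlow i h2
        rw [h1] at this
        rcases lt_or_eq_of_le this with h' | h'
        · linarith
        · exact absurd h'.symm h3
      · norm_num
  set ε0 : ℝ := Bud.inf' hBne id with hε0Def
  have hε0pos : 0 < ε0 := by
    rw [hε0Def, Finset.lt_inf'_iff]
    exact hBpos
  set ε : ℝ := ε0 / (Csum + 1) with hεDef
  have hεpos : 0 < ε := div_pos hε0pos (by linarith)
  have hεC : ε * (Csum + 1) = ε0 := div_mul_cancel₀ _ (by linarith)
  have hkey : ∀ c : ℝ, |c| ≤ Csum → ∀ b ∈ Bud, ε * |c| < b := by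
    intro c hc b hb
    have h1 : ε * |c| ≤ ε * Csum := mul_le_mul_of_nonneg_left hc (le_of_lt hεpos)
    have h2 : ε * Csum < ε0 := by nlinarith
    have h3 : ε0 ≤ b := by
      rw [hε0Def] at *
      exact Finset.inf'_le id hb
    linarith
  -- box bounds for the perturbed solution
  have hboxsd : ∀ θ : ℝ, |θ| = 1 → ∀ s d,
      0 ≤ xsd s d + θ * (ε * vext (Sum.inl (s, d))) ∧
      xsd s d + θ * (ε * vext (Sum.inl (s, d))) ≤ 1 := by
    intro θ hθ s d
    by_cases hf : 0 < xsd s d ∧ xsd s d < 1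
    · have hmem : (if 0 < xsd s d ∧ xsd s d < 1
          then min (xsd s d) (1 - xsd s d) else 1) ∈ Bud := by
        rw [hBudDef]
        apply mem_insert_of_mem
        exact mem_union_left _ (mem_union_left _ (mem_union_left _ (mem_union_left _
          (mem_image.mpr ⟨(s, d), mem_univ _, rfl⟩))))
      rw [if_pos hf] at hmem
      have hbb := hkey _ (hsingle (Sum.inl (s, d))) _ hmem
      have habs : |θ * (ε * vext (Sum.inl (s, d)))| = ε * |vext (Sum.inl (s, d))| := by
        rw [abs_mul, abs_mul, hθ, one_mul, abs_of_pos hεpos]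
      have hlt := lt_min_iff.mp (habs ▸ hbb)
      constructor
      · have := neg_abs_le (θ * (ε * vext (Sum.inl (s, d))))
        linarith [hlt.1]
      · have := le_abs_self (θ * (ε * vext (Sum.inl (s, d))))
        linarith [hlt.2]
    · rw [hzsd s d hf]
      simpa using bsd s d
  have hboxij : ∀ θ : ℝ, |θ| = 1 → ∀ i j,
      0 ≤ xij i j + θ * (ε * vext (Sum.inr (Sum.inl (i, j)))) ∧
      xij i j + θ * (ε * vext (Sum.inr (Sum.inl (i, j)))) ≤ 1 := by
    intro θ hθ i j
    by_cases hf : 0 < xij i j ∧ xij i j < 1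
    · have hmem : (if 0 < xij i j ∧ xij i j < 1
          then min (xij i j) (1 - xij i j) else 1) ∈ Bud := by
        rw [hBudDef]
        apply mem_insert_of_mem
        exact mem_union_left _ (mem_union_left _ (mem_union_left _ (mem_union_right _
          (mem_image.mpr ⟨(i, j), mem_univ _, rfl⟩))))
      rw [if_pos hf] at hmem
      have hbb := hkey _ (hsingle (Sum.inr (Sum.inl (i, j)))) _ hmem
      have habs : |θ * (ε * vext (Sum.inr (Sum.inl (i, j))))|
          = ε * |vext (Sum.inr (Sum.inl (i, j)))| := by
        rw [abs_mul, abs_mul, hθ, one_mul, abs_of_pos hεpos]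
      have hlt := lt_min_iff.mp (habs ▸ hbb)
      constructor
      · have := neg_abs_le (θ * (ε * vext (Sum.inr (Sum.inl (i, j)))))
        linarith [hlt.1]
      · have := le_abs_self (θ * (ε * vext (Sum.inr (Sum.inl (i, j)))))
        linarith [hlt.2]
    · rw [hzij i j hf]
      simpa using bij i j
  have hboxdt : ∀ θ : ℝ, |θ| = 1 → ∀ d,
      0 ≤ xdt d + θ * (ε * vext (Sum.inr (Sum.inr (Sum.inl d)))) ∧
      xdt d + θ * (ε * vext (Sum.inr (Sum.inr (Sum.inl d)))) ≤ 1 := by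
    intro θ hθ d
    by_cases hf : 0 < xdt d ∧ xdt d < 1
    · have hmem : (if 0 < xdt d ∧ xdt d < 1
          then min (xdt d) (1 - xdt d) else 1) ∈ Bud := by
        rw [hBudDef]
        apply mem_insert_of_mem
        exact mem_union_left _ (mem_union_left _ (mem_union_right _
          (mem_image.mpr ⟨d, mem_univ _, rfl⟩)))
      rw [if_pos hf] at hmem
      have hbb := hkey _ (hsingle (Sum.inr (Sum.inr (Sum.inl d)))) _ hmem
      have habs : |θ * (ε * vext (Sum.inr (Sum.inr (Sum.inl d))))|
          = ε * |vext (Sum.inr (Sum.inr (Sum.inl d)))| := by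
        rw [abs_mul, abs_mul, hθ, one_mul, abs_of_pos hεpos]
      have hlt := lt_min_iff.mp (habs ▸ hbb)
      constructor
      · have := neg_abs_le (θ * (ε * vext (Sum.inr (Sum.inr (Sum.inl d)))))
        linarith [hlt.1]
      · have := le_abs_self (θ * (ε * vext (Sum.inr (Sum.inr (Sum.inl d)))))
        linarith [hlt.2]
    · rw [hzdt d hf]
      simpa using bdt d
  -- assemble
  refine ⟨fun s d => ε * vext (Sum.inl (s, d)),
    fun i j => ε * vext (Sum.inr (Sum.inl (i, j))),
    fun d => ε * vext (Sum.inr (Sum.inr (Sum.inl d))), ?_, ?_⟩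
  · -- nonzero
    rintro ⟨h1, h2, h3⟩
    have h1' : ∀ s d, vext (Sum.inl (s, d)) = 0 := by
      intro s d
      have := congrFun (congrFun h1 s) d
      simp only [Pi.zero_apply] at this
      rcases mul_eq_zero.mp this with h | h
      · exact absurd h (ne_of_gt hεpos)
      · exact h
    have h2' : ∀ i j, vext (Sum.inr (Sum.inl (i, j))) = 0 := by
      intro i j
      have := congrFun (congrFun h2 i) j
      simp only [Pi.zero_apply] at this
      rcases mul_eq_zero.mp this with h | h
      · exact absurd h (ne_of_gt hεpos)
      · exact h
    have h3' : ∀ d, vext (Sum.inr (Sum.inr (Sum.inl d))) = 0 := by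
      intro d
      have := congrFun h3 d
      simp only [Pi.zero_apply] at this
      rcases mul_eq_zero.mp this with h | h
      · exact absurd h (ne_of_gt hεpos)
      · exact h
    have h4' : ∀ i, vext (Sum.inr (Sum.inr (Sum.inr i))) = 0 := by
      intro i
      have := hheadK i
      rw [Finset.sum_eq_zero (fun s _ => h1' s i), Finset.sum_eq_zero (fun h _ => h2' h i)] at this
      linarith
    apply hv0
    funext e
    obtain ⟨ee, hPe⟩ := e
    have hvv : v ⟨ee, hPe⟩ = vext ee := (hve ⟨ee, hPe⟩).symm
    rcases ee with ⟨s, d⟩ | ⟨⟨i, j⟩ | (d | i)⟩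
    · rw [Pi.zero_apply, hvv]; exact h1' s d
    · rw [Pi.zero_apply, hvv]; exact h2' i j
    · rw [Pi.zero_apply, hvv]; exact h3' d
    · rw [Pi.zero_apply, hvv]; exact h4' i
  · intro θ hθc
    have hθ : |θ| = 1 := by rcases hθc with rfl | rfl <;> norm_num
    beta_reduce
    refine ⟨hboxsd θ hθ, hboxij θ hθ, hboxdt θ hθ, ?_, ?_, ?_, ?_, ?_, ?_⟩
    · -- support sd
      intro s d hns
      have hx0 := hsup1 s d hns
      have hw0 : vext (Sum.inl (s, d)) = 0 := hzsd s d (by rw [hx0]; rintro ⟨hc, -⟩; exact lt_irrefl _ hc)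
      rw [hx0, hw0]; ring
    · -- support ij
      intro i j hns
      have hx0 := hsup2 i j hns
      have hw0 : vext (Sum.inr (Sum.inl (i, j))) = 0 := hzij i j (by rw [hx0]; rintro ⟨hc, -⟩; exact lt_irrefl _ hc)
      rw [hx0, hw0]; ring
    · -- support dt
      intro d hns
      have hx0 := hsup3 d hns
      have hw0 : vext (Sum.inr (Sum.inr (Sum.inl d))) = 0 := hzdt d (by rw [hx0]; rintro ⟨hc, -⟩; exact lt_irrefl _ hc)
      rw [hx0, hw0]; ring
    · -- capacity
      intro s
      rw [sum_shift]
      by_cases ht : (∑ d, xsd s d) = ((l r s : ℕ) : ℝ)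
      · rw [hcapK s ht, ht]
        simp
      · have hmem : (if (∑ d, xsd s d) = ((l r s : ℕ) : ℝ) then 1
            else ((l r s : ℕ) : ℝ) - ∑ d, xsd s d) ∈ Bud := by
          rw [hBudDef]
          apply mem_insert_of_mem
          exact mem_union_left _ (mem_union_right _ (mem_image.mpr ⟨s, mem_univ _, rfl⟩))
        rw [if_neg ht] at hmem
        have hbb := hkey _ (hcapB s) _ hmem
        have habs : θ * (ε * ∑ d, vext (Sum.inl (s, d)))
            ≤ ε * |∑ d, vext (Sum.inl (s, d))| := by
          calc θ * (ε * ∑ d, vext (Sum.inl (s, d)))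
              ≤ |θ * (ε * ∑ d, vext (Sum.inl (s, d)))| := le_abs_self _
          _ = ε * |∑ d, vext (Sum.inl (s, d))| := by
              rw [abs_mul, abs_mul, hθ, one_mul, abs_of_pos hεpos]
        linarith
    · -- conservation
      intro i hMd
      rw [sum_shift, sum_shift, sum_shift]
      have hc1 := hheadK i
      have hc2 := htailK i
      have hc3 := hcons i hMd
      linear_combination hc3 + (θ * ε) * hc1 - (θ * ε) * hc2
    · -- lower bound
      intro i hMd
      rcases hy i with h0 | h1
      · rw [h0]
        exact add_nonneg (Finset.sum_nonneg fun s _ => (hboxsd θ hθ s i).1)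
          (Finset.sum_nonneg fun h _ => (hboxij θ hθ h i).1)
      · rw [sum_shift, sum_shift, h1]
        by_cases hT : (∑ s, xsd s i) + (∑ h, xij h i) = 1
        · have ha0 := hauxLT i h1 hT
          have hss : (∑ s, vext (Sum.inl (s, i))) + (∑ h, vext (Sum.inr (Sum.inl (h, i)))) = 0 := by
            have := hheadK i
            rw [ha0] at this
            linarith
          have hzz : θ * (ε * ∑ s, vext (Sum.inl (s, i)))
              + θ * (ε * ∑ h, vext (Sum.inr (Sum.inl (h, i)))) = 0 := by
            have : θ * (ε * ∑ s, vext (Sum.inl (s, i)))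
                + θ * (ε * ∑ h, vext (Sum.inr (Sum.inl (h, i))))
                = θ * ε * ((∑ s, vext (Sum.inl (s, i))) + ∑ h, vext (Sum.inr (Sum.inl (h, i)))) := by
              ring
            rw [this, hss, mul_zero]
          linarith [hT, hzz]
        · have hmem : (if yv i = 1 ∧ r ∈ Md i ∧ (∑ s, xsd s i) + (∑ h, xij h i) ≠ 1
              then ((∑ s, xsd s i) + (∑ h, xij h i)) - 1 else 1) ∈ Bud := by
            rw [hBudDef]
            apply mem_insert_of_mem
            exact mem_union_right _ (mem_image.mpr ⟨i, mem_univ _, rfl⟩)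
          rw [if_pos ⟨h1, hMd, hT⟩] at hmem
          have hbb := hkey _ (hsingle (Sum.inr (Sum.inr (Sum.inr i)))) _ hmem
          have hcomb : θ * (ε * ∑ s, vext (Sum.inl (s, i)))
              + θ * (ε * ∑ h, vext (Sum.inr (Sum.inl (h, i))))
              = -(θ * (ε * vext (Sum.inr (Sum.inr (Sum.inr i))))) := by
            linear_combination (θ * ε) * (hheadK i)
          have habs2 : -(θ * (ε * vext (Sum.inr (Sum.inr (Sum.inr i)))))
              ≥ -(ε * |vext (Sum.inr (Sum.inr (Sum.inr i)))|) := by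
            have h5 : θ * (ε * vext (Sum.inr (Sum.inr (Sum.inr i))))
                ≤ |θ * (ε * vext (Sum.inr (Sum.inr (Sum.inr i))))| := le_abs_self _
            have h6 : |θ * (ε * vext (Sum.inr (Sum.inr (Sum.inr i))))|
                = ε * |vext (Sum.inr (Sum.inr (Sum.inr i)))| := by
              rw [abs_mul, abs_mul, hθ, one_mul, abs_of_pos hεpos]
            linarith
          linarith

end Perturb

section IPM

variable {R S D : Type*} [Fintype R] [Fintype S] [Fintype D]
  (Md : D → Set R) [∀ d, DecidablePred (· ∈ Md d)]
  (Bm : S → D → Prop) (Am : D → D → Prop)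
  (l : R → S → ℕ)

/-- The single-resource-type constraints (2)–(4) of IPM for resource type `r`,
with the demand-satisfaction variables `y` fixed: support on pre-processed
arcs, capacity `l r s` at each starting location, flow conservation at each
demand requiring `r`, and incoming flow at least `y i`. -/
def FeasR (r : R) (yv : D → ℝ)
    (xsd : S → D → ℝ) (xij : D → D → ℝ) (xdt : D → ℝ) : Prop :=
  (∀ s d, ¬ (Bm s d ∧ r ∈ Md d) → xsd s d = 0) ∧
  (∀ i j, ¬ (Am i j ∧ r ∈ Md i ∧ r ∈ Md j) → xij i j = 0) ∧
  (∀ d, r ∉ Md d → xdt d = 0) ∧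
  (∀ s, ∑ d, xsd s d ≤ l r s) ∧
  (∀ i : D, r ∈ Md i →
    (∑ s, xsd s i) + (∑ h, xij h i) = (∑ j, xij i j) + xdt i) ∧
  (∀ i : D, r ∈ Md i → yv i ≤ (∑ s, xsd s i) + (∑ h, xij h i))

/-- A point of the relaxed IPM polytope: `y` binary, `x` in `[0,1]`,
and constraints (2)–(4) for every resource type. -/
def IPMPoint
    (p : (D → ℝ) × (R → S → D → ℝ) × (R → D → D → ℝ) × (R → D → ℝ)) : Prop :=
  (∀ d, p.1 d = 0 ∨ p.1 d = 1) ∧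
  (∀ r s d, 0 ≤ p.2.1 r s d ∧ p.2.1 r s d ≤ 1) ∧
  (∀ r i j, 0 ≤ p.2.2.1 r i j ∧ p.2.2.1 r i j ≤ 1) ∧
  (∀ r d, 0 ≤ p.2.2.2 r d ∧ p.2.2.2 r d ≤ 1) ∧
  (∀ r : R, FeasR Md Bm Am l r p.1 (p.2.1 r) (p.2.2.1 r) (p.2.2.2 r))

/-- Flow decomposition theorem: if, for each fixed binary `y` and each
resource type `r`, the single-commodity feasibility problem IPM-R has an
integral (0/1) feasible solution whenever it has a fractional one in `[0,1]`,
then every extreme point of `{(y,x) : y ∈ {0,1}^D, x satisfies (2)–(4),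
0 ≤ x ≤ 1}` has integral `x`-coordinates. -/
theorem IPM_flow_decomposition_integrality
    (hTU : ∀ (yv : D → ℝ), (∀ d, yv d = 0 ∨ yv d = 1) → ∀ r : R,
      (∃ (xsd : S → D → ℝ) (xij : D → D → ℝ) (xdt : D → ℝ),
        (∀ s d, 0 ≤ xsd s d ∧ xsd s d ≤ 1) ∧
        (∀ i j, 0 ≤ xij i j ∧ xij i j ≤ 1) ∧
        (∀ d, 0 ≤ xdt d ∧ xdt d ≤ 1) ∧
        FeasR Md Bm Am l r yv xsd xij xdt) →
      (∃ (xsd : S → D → ℝ) (xij : D → D → ℝ) (xdt : D → ℝ),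
        (∀ s d, xsd s d = 0 ∨ xsd s d = 1) ∧
        (∀ i j, xij i j = 0 ∨ xij i j = 1) ∧
        (∀ d, xdt d = 0 ∨ xdt d = 1) ∧
        FeasR Md Bm Am l r yv xsd xij xdt)) :
    ∀ p ∈ Set.extremePoints ℝ {p | IPMPoint Md Bm Am l p},
      (∀ r s d, ∃ n : ℤ, p.2.1 r s d = n) ∧
      (∀ r i j, ∃ n : ℤ, p.2.2.1 r i j = n) ∧
      (∀ r d, ∃ n : ℤ, p.2.2.2 r d = n) := by
  intro p hp
  obtain ⟨hpS, hext⟩ := hp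
  rw [Set.mem_setOf_eq] at hpS
  obtain ⟨hy, hbsd, hbij, hbdt, hfeas⟩ := hpS
  suffices key : ∀ r : R, ¬ ((∃ s d, 0 < p.2.1 r s d ∧ p.2.1 r s d < 1) ∨
      (∃ i j, 0 < p.2.2.1 r i j ∧ p.2.2.1 r i j < 1) ∨
      (∃ d, 0 < p.2.2.2 r d ∧ p.2.2.2 r d < 1)) by
    refine ⟨?_, ?_, ?_⟩
    · intro r s d
      by_cases h0 : p.2.1 r s d = 0
      · exact ⟨0, by rw [h0]; norm_num⟩
      by_cases h1 : p.2.1 r s d = 1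
      · exact ⟨1, by rw [h1]; norm_num⟩
      exact absurd (Or.inl ⟨s, d, lt_of_le_of_ne (hbsd r s d).1 (Ne.symm h0),
        lt_of_le_of_ne (hbsd r s d).2 h1⟩) (key r)
    · intro r i j
      by_cases h0 : p.2.2.1 r i j = 0
      · exact ⟨0, by rw [h0]; norm_num⟩
      by_cases h1 : p.2.2.1 r i j = 1
      · exact ⟨1, by rw [h1]; norm_num⟩
      exact absurd (Or.inr (Or.inl ⟨i, j, lt_of_le_of_ne (hbij r i j).1 (Ne.symm h0),
        lt_of_le_of_ne (hbij r i j).2 h1⟩)) (key r)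
    · intro r d
      by_cases h0 : p.2.2.2 r d = 0
      · exact ⟨0, by rw [h0]; norm_num⟩
      by_cases h1 : p.2.2.2 r d = 1
      · exact ⟨1, by rw [h1]; norm_num⟩
      exact absurd (Or.inr (Or.inr ⟨d, lt_of_le_of_ne (hbdt r d).1 (Ne.symm h0),
        lt_of_le_of_ne (hbdt r d).2 h1⟩)) (key r)
  intro r hfr
  classical
  obtain ⟨hsup1, hsup2, hsup3, hcap, hcons, hlow⟩ := hfeas r
  obtain ⟨wsd, wij, wdt, hwne, hpert⟩ := IPM_perturb Md Bm Am l r p.1 hy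
    (p.2.1 r) (p.2.2.1 r) (p.2.2.2 r) (hbsd r) (hbij r) (hbdt r)
    hsup1 hsup2 hsup3 hcap hcons hlow hfr
  obtain ⟨hbox1p, hbox2p, hbox3p, hs1p, hs2p, hs3p, hcapp, hconsp, hlowp⟩ := hpert 1 (Or.inl rfl)
  obtain ⟨hbox1m, hbox2m, hbox3m, hs1m, hs2m, hs3m, hcapm, hconsm, hlowm⟩ :=
    hpert (-1) (Or.inr rfl)
  set p₁ : (D → ℝ) × (R → S → D → ℝ) × (R → D → D → ℝ) × (R → D → ℝ) :=
    (p.1, Function.update p.2.1 r (fun s d => p.2.1 r s d + 1 * wsd s d),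
      Function.update p.2.2.1 r (fun i j => p.2.2.1 r i j + 1 * wij i j),
      Function.update p.2.2.2 r (fun d => p.2.2.2 r d + 1 * wdt d)) with hp₁
  set p₂ : (D → ℝ) × (R → S → D → ℝ) × (R → D → D → ℝ) × (R → D → ℝ) :=
    (p.1, Function.update p.2.1 r (fun s d => p.2.1 r s d + (-1) * wsd s d),
      Function.update p.2.2.1 r (fun i j => p.2.2.1 r i j + (-1) * wij i j),
      Function.update p.2.2.2 r (fun d => p.2.2.2 r d + (-1) * wdt d)) with hp₂
  have h1feas : p₁ ∈ {p | IPMPoint Md Bm Am l p} := by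
    rw [Set.mem_setOf_eq]
    refine ⟨hy, ?_, ?_, ?_, ?_⟩
    · intro r' s d
      by_cases hr : r' = r
      · subst hr; rw [hp₁]; simp only [Function.update_self]; exact hbox1p s d
      · rw [hp₁]; simp only [Function.update_of_ne hr]; exact hbsd r' s d
    · intro r' i j
      by_cases hr : r' = r
      · subst hr; rw [hp₁]; simp only [Function.update_self]; exact hbox2p i j
      · rw [hp₁]; simp only [Function.update_of_ne hr]; exact hbij r' i j
    · intro r' d
      by_cases hr : r' = r
      · subst hr; rw [hp₁]; simp only [Function.update_self]; exact hbox3p d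
      · rw [hp₁]; simp only [Function.update_of_ne hr]; exact hbdt r' d
    · intro r'
      by_cases hr : r' = r
      · subst hr; rw [hp₁]; simp only [Function.update_self]
        exact ⟨hs1p, hs2p, hs3p, hcapp, hconsp, hlowp⟩
      · rw [hp₁]; simp only [Function.update_of_ne hr]; exact hfeas r'
  have h2feas : p₂ ∈ {p | IPMPoint Md Bm Am l p} := by
    rw [Set.mem_setOf_eq]
    refine ⟨hy, ?_, ?_, ?_, ?_⟩
    · intro r' s d
      by_cases hr : r' = r
      · subst hr; rw [hp₂]; simp only [Function.update_self]; exact hbox1m s d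
      · rw [hp₂]; simp only [Function.update_of_ne hr]; exact hbsd r' s d
    · intro r' i j
      by_cases hr : r' = r
      · subst hr; rw [hp₂]; simp only [Function.update_self]; exact hbox2m i j
      · rw [hp₂]; simp only [Function.update_of_ne hr]; exact hbij r' i j
    · intro r' d
      by_cases hr : r' = r
      · subst hr; rw [hp₂]; simp only [Function.update_self]; exact hbox3m d
      · rw [hp₂]; simp only [Function.update_of_ne hr]; exact hbdt r' d
    · intro r'
      by_cases hr : r' = r
      · subst hr; rw [hp₂]; simp only [Function.update_self]
        exact ⟨hs1m, hs2m, hs3m, hcapm, hconsm, hlowm⟩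
      · rw [hp₂]; simp only [Function.update_of_ne hr]; exact hfeas r'
  have hseg : p ∈ openSegment ℝ p₁ p₂ := by
    refine ⟨1/2, 1/2, by norm_num, by norm_num, by norm_num, ?_⟩
    rw [hp₁, hp₂]
    refine Prod.ext ?_ (Prod.ext ?_ (Prod.ext ?_ ?_))
    · funext d
      show (1/2 : ℝ) * p.1 d + (1/2 : ℝ) * p.1 d = p.1 d
      ring
    · funext r' s d
      by_cases hr : r' = r
      · subst hr
        show (1/2 : ℝ) * (Function.update p.2.1 r' _ r' s d)
          + (1/2 : ℝ) * (Function.update p.2.1 r' _ r' s d) = p.2.1 r' s d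
        simp only [Function.update_self]
        ring
      · show (1/2 : ℝ) * (Function.update p.2.1 r _ r' s d)
          + (1/2 : ℝ) * (Function.update p.2.1 r _ r' s d) = p.2.1 r' s d
        simp only [Function.update_of_ne hr]
        ring
    · funext r' i j
      by_cases hr : r' = r
      · subst hr
        show (1/2 : ℝ) * (Function.update p.2.2.1 r' _ r' i j)
          + (1/2 : ℝ) * (Function.update p.2.2.1 r' _ r' i j) = p.2.2.1 r' i j
        simp only [Function.update_self]
        ring
      · show (1/2 : ℝ) * (Function.update p.2.2.1 r _ r' i j)
          + (1/2 : ℝ) * (Function.update p.2.2.1 r _ r' i j) = p.2.2.1 r' i j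
        simp only [Function.update_of_ne hr]
        ring
    · funext r' d
      by_cases hr : r' = r
      · subst hr
        show (1/2 : ℝ) * (Function.update p.2.2.2 r' _ r' d)
          + (1/2 : ℝ) * (Function.update p.2.2.2 r' _ r' d) = p.2.2.2 r' d
        simp only [Function.update_self]
        ring
      · show (1/2 : ℝ) * (Function.update p.2.2.2 r _ r' d)
          + (1/2 : ℝ) * (Function.update p.2.2.2 r _ r' d) = p.2.2.2 r' d
        simp only [Function.update_of_ne hr]
        ring
  have he1 := hext h1feas h2feas hseg
  apply hwne
  have he2 : p₁.2.1 r = p.2.1 r := by rw [he1]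
  have he3 : p₁.2.2.1 r = p.2.2.1 r := by rw [he1]
  have he4 : p₁.2.2.2 r = p.2.2.2 r := by rw [he1]
  rw [hp₁] at he2 he3 he4
  simp only [Function.update_self] at he2 he3 he4
  refine ⟨?_, ?_, ?_⟩
  · funext s d
    have := congrFun (congrFun he2 s) d
    simp only [Pi.zero_apply]
    linarith [this]
  · funext i j
    have := congrFun (congrFun he3 i) j
    simp only [Pi.zero_apply]
    linarith [this]
  · funext d
    have := congrFun he4 d
    simp only [Pi.zero_apply]
    linarith [this]


end IPM
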